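/- For any nonzero integer n and nonzero complex number a, the linear map d_{n,a} := φ_n∘τ_a − id_Vir is a 1-differential operator on the Virasoro algebra; moreover d_{0,0} := −id_Vir is also a 1-differential operator. -/

import Mathlib

def VirRel {V : Type*} [LieRing V] [LieAlgebra ℂ V] (L : ℤ → V) (C : V) : Prop :=
  (∀ m n : ℤ, ⁅L m, L n⁆ = ((n : ℂ) - (m : ℂ)) • L (m + n)
      + (if m + n = 0 then ((m : ℂ) ^ 3 - (m : ℂ)) / 12 else 0) • C) ∧
  ∀ m : ℤ, ⁅C, L m⁆ = 0

def PhiTau {V : Type*} [LieRing V] [LieAlgebra ℂ V] (L : ℤ → V) (C : V)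
    (n : ℤ) (a : ℂ) (f : V →ₗ[ℂ] V) : Prop :=
  (∀ i : ℤ, f (L i) = (a ^ i / (n : ℂ)) •
      (L (n * i) - (if i = 0 then ((n : ℂ) ^ 2 - 1) / 24 else 0) • C)) ∧
  f C = (n : ℂ) • C

set_option maxHeartbeats 1000000 in
theorem stmt_5 {V : Type*} [LieRing V] [LieAlgebra ℂ V]
    (L : ℤ → V) (C : V)
    (b : Module.Basis (Option ℤ) ℂ V) (hbL : ∀ i : ℤ, b (some i) = L i) (hbC : b none = C)
    (hrel : VirRel L C)
    (n : ℤ) (hn : n ≠ 0) (a : ℂ) (ha : a ≠ 0)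
    (f : V →ₗ[ℂ] V) (hf : PhiTau L C n a f) :
    (∀ x y : V, (f - (LinearMap.id : V →ₗ[ℂ] V)) ⁅x, y⁆ =
        ⁅(f - (LinearMap.id : V →ₗ[ℂ] V)) x, y⁆ +
        ⁅x, (f - (LinearMap.id : V →ₗ[ℂ] V)) y⁆ +
        ⁅(f - (LinearMap.id : V →ₗ[ℂ] V)) x, (f - (LinearMap.id : V →ₗ[ℂ] V)) y⁆) ∧
    (∀ x y : V, (-(LinearMap.id : V →ₗ[ℂ] V)) ⁅x, y⁆ =
        ⁅(-(LinearMap.id : V →ₗ[ℂ] V)) x, y⁆ +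
        ⁅x, (-(LinearMap.id : V →ₗ[ℂ] V)) y⁆ +
        ⁅(-(LinearMap.id : V →ₗ[ℂ] V)) x, (-(LinearMap.id : V →ₗ[ℂ] V)) y⁆) := by
  obtain ⟨hLL, hCL⟩ := hrel
  obtain ⟨hfL, hfC⟩ := hf
  have hLC : ∀ m : ℤ, ⁅L m, C⁆ = 0 := fun m => by rw [← lie_skew, hCL]; simp
  have hnC : (n : ℂ) ≠ 0 := Int.cast_ne_zero.mpr hn
  have hai : ∀ k : ℤ, a ^ k ≠ 0 := fun k => zpow_ne_zero k ha
  have hkey : ∀ x y : V, f ⁅x, y⁆ = ⁅f x, f y⁆ := by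
    let B₁ : V →ₗ[ℂ] V →ₗ[ℂ] V := LinearMap.mk₂ ℂ (fun x y => f ⁅x, y⁆)
      (fun x x' y => by simp only [add_lie, map_add]) (fun c x y => by simp only [smul_lie, map_smul])
      (fun x y y' => by simp only [lie_add, map_add]) (fun c x y => by simp only [lie_smul, map_smul])
    let B₂ : V →ₗ[ℂ] V →ₗ[ℂ] V := LinearMap.mk₂ ℂ (fun x y => ⁅f x, f y⁆)
      (fun x x' y => by simp only [map_add, add_lie]) (fun c x y => by simp only [map_smul, smul_lie])
      (fun x y y' => by simp only [map_add, lie_add]) (fun c x y => by simp only [map_smul, lie_smul])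
    have hB : B₁ = B₂ := by
      apply LinearMap.ext_basis b b
      intro i j
      match i, j with
      | none, none =>
        simp [B₁, B₂, hbC, hfC, lie_self]
      | none, some j =>
        simp only [B₁, B₂, LinearMap.mk₂_apply, hbC, hbL, hfC, hfL, hCL, map_zero,
          lie_sub, lie_smul, smul_sub, smul_smul, lie_self]
        split_ifs <;> simp [hCL, lie_self]
      | some i, none =>
        simp only [B₁, B₂, LinearMap.mk₂_apply, hbC, hbL, hfC, hfL, hLC, map_zero,
          sub_lie, smul_lie, lie_smul, smul_sub, smul_smul, lie_self]
        split_ifs <;> simp [hLC, lie_self]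
      | some i, some j =>
        simp only [B₁, B₂, LinearMap.mk₂_apply, hbL]
        rw [hLL i j, map_add, map_smul, map_smul, hfL, hfC, hfL i, hfL j]
        simp only [lie_sub, sub_lie, lie_smul, smul_lie, hLL, hCL, hLC, lie_self,
          smul_zero, zero_sub, sub_zero, neg_zero, zero_lie, lie_zero,
          smul_sub, smul_add, smul_smul]
        rw [show n * i + n * j = n * (i + j) from by ring]
        simp only [mul_eq_zero, hn, false_or]
        rw [zpow_add₀ ha]
        by_cases h : i + j = 0
        · obtain rfl : j = -i := by omega
          have h' : i + -i = 0 := by ring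
          simp only [if_pos h']
          simp only [zpow_neg]
          match_scalars <;> push_cast <;> field_simp [hai] <;> ring
        · simp only [if_neg h]
          match_scalars <;> push_cast <;> field_simp [hai] <;> ring
    intro x y
    simpa [B₁, B₂] using LinearMap.congr_fun (LinearMap.congr_fun hB x) y
  constructor
  · intro x y
    simp only [LinearMap.sub_apply, LinearMap.id_apply, hkey, sub_lie, lie_sub]
    abel
  · intro x y
    simp only [LinearMap.neg_apply, LinearMap.id_apply, neg_lie, lie_neg]
    abel
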